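/- In the setting of the marginal function f(x) = max_{y∈Y} φ(x, y), let y^ε: ℝⁿ → ℝᵐ be any single-valued map with y^ε(x) ∈ Y^ε(x) for all x ∈ ℝⁿ and ε > 0, and fix x̄ ∈ ℝⁿ. Then: (a) φ(x, y^ε(x)) → f(x̄) as ε ↓ 0 and x → x̄ jointly; and (b) every limit of ∇ₓφ(x_k, y^{ε_k}(x_k)) along sequences ε_k ↓ 0 and x_k → x̄ belongs to the Clarke subdifferential ∂f(x̄); consequently the map G(x, ε) = {∇ₓφ(x, y) : y ∈ Y^ε(x)} satisfies limsup_{ε↓0, x→x̄} G(x, ε) ⊆ ∂f(x̄). -/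

import Mathlib

open Filter Topology Set
open scoped RealInnerProductSpace NNReal

noncomputable section

variable {E : Type*} [NormedAddCommGroup E] [InnerProductSpace ℝ E]

/-- The Clarke generalized directional derivative of `f` at `x` in direction `d`. -/
def clarkeDeriv (f : E → ℝ) (x d : E) : ℝ :=
  Filter.limsup (fun p : E × ℝ => (f (p.1 + p.2 • d) - f p.1) / p.2)
    ((𝓝 x) ×ˢ (𝓝[>] (0 : ℝ)))

/-- The Clarke subdifferential of `f` at `x`. -/
def clarkeSubdiff (f : E → ℝ) (x : E) : Set E :=
  {v | ∀ d : E, ⟪v, d⟫ ≤ clarkeDeriv f x d}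

/-- Outer limit of `G x ε` along joint sequences `ε_k ↓ 0` and `x_k → x̄`. -/
def SeqJointLimsup (G : E → ℝ → Set E) (xbar : E) : Set E :=
  {u | ∃ (eps : ℕ → ℝ) (xs : ℕ → E) (vs : ℕ → E),
    (∀ k, 0 < eps k) ∧ Tendsto eps atTop (𝓝 0) ∧ Tendsto xs atTop (𝓝 xbar) ∧
    (∀ k, vs k ∈ G (xs k) (eps k)) ∧ Tendsto vs atTop (𝓝 u)}

/-- Outer limit `limsup_{x → xbar} S x` of a set-valued map. -/
def SetMapLimsup (S : E → Set E) (xbar : E) : Set E :=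
  {u | ∃ (xs : ℕ → E) (vs : ℕ → E),
    Tendsto xs atTop (𝓝 xbar) ∧ (∀ k, vs k ∈ S (xs k)) ∧ Tendsto vs atTop (𝓝 u)}

/-- Outer limit of a family of sets `A ε` as `ε ↓ 0`. -/
def FamilyOuterLimit (A : ℝ → Set E) : Set E :=
  {u | ∃ (eps : ℕ → ℝ) (vs : ℕ → E), (∀ k, 0 < eps k) ∧ Tendsto eps atTop (𝓝 0) ∧
    (∀ k, vs k ∈ A (eps k)) ∧ Tendsto vs atTop (𝓝 u)}

/-- Inner limit of a family of sets `A ε` as `ε ↓ 0`. -/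
def FamilyInnerLimit (A : ℝ → Set E) : Set E :=
  {u | ∀ eps : ℕ → ℝ, (∀ k, 0 < eps k) → Tendsto eps atTop (𝓝 0) →
    ∃ vs : ℕ → E, (∀ᶠ k in atTop, vs k ∈ A (eps k)) ∧ Tendsto vs atTop (𝓝 u)}

/-- Painlevé–Kuratowski convergence of the family `A ε` to the set `B` as `ε ↓ 0`. -/
def PKTendsto (A : ℝ → Set E) (B : Set E) : Prop :=
  FamilyOuterLimit A ⊆ B ∧ B ⊆ FamilyInnerLimit A

/-- `g` is the minimal-norm element of `S`. -/
def IsMinNormElt (S : Set E) (g : E) : Prop :=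
  g ∈ S ∧ ∀ v ∈ S, ‖g‖ ≤ ‖v‖

/-- A descent-oriented subdifferential for `f`:  for each fixed `ε > 0` the map
`x ↦ G x ε` is closed-valued and locally bounded, (G1) the joint outer limit as
`ε ↓ 0`, `x → x̄` is contained in the Clarke subdifferential, and (G2) the sets
`limsup_{x → x̄} G x ε` converge in the Painlevé–Kuratowski sense, as `ε ↓ 0`,
to the singleton consisting of the minimal-norm Clarke subgradient. -/
structure IsDescentOrientedSubdiff (f : E → ℝ) (G : E → ℝ → Set E) : Prop where
  closedVals : ∀ ε : ℝ, 0 < ε → ∀ x : E, IsClosed (G x ε)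
  locBounded : ∀ ε : ℝ, 0 < ε → ∀ x : E,
    ∃ δ > (0 : ℝ), ∃ M : ℝ, ∀ y : E, ‖y - x‖ < δ → ∀ v ∈ G y ε, ‖v‖ ≤ M
  outerClarke : ∀ xbar : E, SeqJointLimsup G xbar ⊆ clarkeSubdiff f xbar
  minNormLimit : ∀ xbar : E, ∃ g : E, IsMinNormElt (clarkeSubdiff f xbar) g ∧
    PKTendsto (fun ε => SetMapLimsup (fun x => G x ε) xbar) {g}

variable {F : Type*} [NormedAddCommGroup F] [InnerProductSpace ℝ F]

/-- The marginal function `f(x) = max_{y ∈ Y} φ(x, y)`. -/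
def marginalMax (φ : E → F → ℝ) (Y : Set F) (x : E) : ℝ :=
  sSup ((φ x) '' Y)

/-- The solution set `Y*(x)` of the inner maximization. -/
def maxSol (φ : E → F → ℝ) (Y : Set F) (x : E) : Set F :=
  {y ∈ Y | ∀ y' ∈ Y, φ x y' ≤ φ x y}

/-- The solution set `Y^ε(x)` of the subgradient-regularized inner problem, where
`gx x y` denotes the partial gradient `∇ₓ φ (x, y)`. -/
def regMaxSol (φ : E → F → ℝ) (gx : E → F → E) (Y : Set F) (ε : ℝ) (x : E) : Set F :=
  {y ∈ Y | ∀ y' ∈ Y,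
    φ x y' - ε / 2 * ‖gx x y'‖ ^ 2 ≤ φ x y - ε / 2 * ‖gx x y‖ ^ 2}

/-- for any single-valued selection `y^ε(x) ∈ Y^ε(x)` and any `x̄`,
(a) `φ(x, y^ε(x)) → f(x̄)` jointly as `ε ↓ 0`, `x → x̄`; (b) every limit of
`∇ₓφ(x_k, y^{ε_k}(x_k))` along sequences `ε_k ↓ 0`, `x_k → x̄` belongs to the
Clarke subdifferential `∂f(x̄)`; consequently the map
`G(x, ε) = {∇ₓφ(x, y) : y ∈ Y^ε(x)}` satisfies property (G1) at `x̄`. -/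
theorem regularized_selection_limits {n m : ℕ}
    (Y : Set (EuclideanSpace ℝ (Fin m))) (hYne : Y.Nonempty)
    (hYconv : Convex ℝ Y) (hYcomp : IsCompact Y)
    (φ : EuclideanSpace ℝ (Fin n) → EuclideanSpace ℝ (Fin m) → ℝ)
    (gx : EuclideanSpace ℝ (Fin n) → EuclideanSpace ℝ (Fin m) → EuclideanSpace ℝ (Fin n))
    (hgrad : ∀ x, ∀ y ∈ Y, HasGradientAt (fun x' => φ x' y) (gx x y) x)
    (hφcont : Continuous fun p : EuclideanSpace ℝ (Fin n) × EuclideanSpace ℝ (Fin m) => φ p.1 p.2)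
    (hgxcont : Continuous fun p : EuclideanSpace ℝ (Fin n) × EuclideanSpace ℝ (Fin m) => gx p.1 p.2)
    (hconc : ∀ x, ConcaveOn ℝ Y (fun y => φ x y))
    (ysel : ℝ → EuclideanSpace ℝ (Fin n) → EuclideanSpace ℝ (Fin m))
    (hysel : ∀ ε > (0 : ℝ), ∀ x, ysel ε x ∈ regMaxSol φ gx Y ε x)
    (xbar : EuclideanSpace ℝ (Fin n)) :
    Tendsto (fun p : EuclideanSpace ℝ (Fin n) × ℝ => φ p.1 (ysel p.2 p.1))
      ((𝓝 xbar) ×ˢ (𝓝[>] (0 : ℝ))) (𝓝 (marginalMax φ Y xbar)) ∧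
    (∀ (eps : ℕ → ℝ) (xs : ℕ → EuclideanSpace ℝ (Fin n)) (v : EuclideanSpace ℝ (Fin n)),
      (∀ k, 0 < eps k) → Tendsto eps atTop (𝓝 0) → Tendsto xs atTop (𝓝 xbar) →
      Tendsto (fun k => gx (xs k) (ysel (eps k) (xs k))) atTop (𝓝 v) →
      v ∈ clarkeSubdiff (marginalMax φ Y) xbar) ∧
    SeqJointLimsup (fun x ε => (fun y => gx x y) '' regMaxSol φ gx Y ε x) xbar ⊆
      clarkeSubdiff (marginalMax φ Y) xbar := by
  classical
  set f := marginalMax φ Y with hfdef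
  set F := (𝓝 xbar) ×ˢ (𝓝[>] (0 : ℝ)) with hFdef
  have hφcy : ∀ x, Continuous (fun y => φ x y) := fun x =>
    hφcont.comp (continuous_const.prodMk continuous_id)
  -- bound on gradients over closedBall xbar 1 ×ˢ Y
  obtain ⟨K0, hK0⟩ := ((isCompact_closedBall xbar 1).prod hYcomp).exists_bound_of_continuousOn
    hgxcont.continuousOn
  set K := max K0 0 with hKdef
  have hKnn : (0 : ℝ) ≤ K := le_max_right _ _
  have hK : ∀ x ∈ Metric.closedBall xbar 1, ∀ y ∈ Y, ‖gx x y‖ ≤ K := fun x hx y hy =>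
    le_trans (hK0 (x, y) ⟨hx, hy⟩) (le_max_left _ _)
  -- Lipschitz bound for φ(·, y)
  have hφlip : ∀ y ∈ Y, ∀ a ∈ Metric.closedBall xbar 1, ∀ b ∈ Metric.closedBall xbar 1,
      φ a y - φ b y ≤ K * ‖a - b‖ := by
    intro y hy a ha b hb
    have := (convex_closedBall xbar 1).norm_image_sub_le_of_norm_hasFDerivWithin_le
      (f := fun x => φ x y) (f' := fun x => InnerProductSpace.toDual ℝ _ (gx x y))
      (fun x hx => ((hgrad x y hy).hasFDerivAt).hasFDerivWithinAt)
      (fun x hx => by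
        rw [LinearIsometryEquiv.norm_map]
        exact hK x hx y hy) hb ha
    calc φ a y - φ b y ≤ |φ a y - φ b y| := le_abs_self _
      _ ≤ K * ‖a - b‖ := this
  -- marginal function basics
  have hbdd : ∀ x, BddAbove ((φ x) '' Y) := fun x => hYcomp.bddAbove_image (hφcy x).continuousOn
  have hle : ∀ x : EuclideanSpace ℝ (Fin n), ∀ y ∈ Y, φ x y ≤ f x := fun x y hy =>
    le_csSup (hbdd x) ⟨y, hy, rfl⟩
  have hmax : ∀ x : EuclideanSpace ℝ (Fin n), ∃ y ∈ Y, f x = φ x y := by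
    intro x
    obtain ⟨y, hy, hmaxy⟩ := hYcomp.exists_isMaxOn hYne (hφcy x).continuousOn
    refine ⟨y, hy, le_antisymm (csSup_le (hYne.image _) ?_) (hle x y hy)⟩
    rintro _ ⟨y', hy', rfl⟩
    exact isMaxOn_iff.1 hmaxy y' hy'
  -- f is Lipschitz on the closed ball
  have hflip : ∀ a ∈ Metric.closedBall xbar 1, ∀ b ∈ Metric.closedBall xbar 1,
      f a - f b ≤ K * ‖a - b‖ := by
    intro a ha b hb
    obtain ⟨y, hy, hay⟩ := hmax a
    have h1 := hle b y hy
    have h2 := hφlip y hy a ha b hb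
    linarith
  have hfcont : Tendsto f (𝓝 xbar) (𝓝 (f xbar)) := by
    rw [tendsto_iff_dist_tendsto_zero]
    have hg0 : Tendsto (fun x : EuclideanSpace ℝ (Fin n) => K * ‖x - xbar‖) (𝓝 xbar) (𝓝 0) := by
      have : Tendsto (fun x : EuclideanSpace ℝ (Fin n) => K * ‖x - xbar‖) (𝓝 xbar)
          (𝓝 (K * ‖xbar - xbar‖)) :=
        (continuous_const.mul (continuous_id.sub continuous_const).norm).tendsto xbar
      simpa using this
    refine squeeze_zero' (Eventually.of_forall fun x => dist_nonneg) ?_ hg0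
    filter_upwards [Metric.closedBall_mem_nhds xbar one_pos] with x hx
    rw [Real.dist_eq, abs_sub_le_iff]
    have hxb : xbar ∈ Metric.closedBall xbar 1 := Metric.mem_closedBall_self zero_le_one
    constructor
    · exact hflip x hx xbar hxb
    · rw [show ‖x - xbar‖ = ‖xbar - x‖ from (norm_sub_rev _ _)]
      exact hflip xbar hxb x hx
  -- bounds for regularized solutions
  have hreg : ∀ x ∈ Metric.closedBall xbar 1, ∀ ε : ℝ, 0 < ε → ∀ y ∈ regMaxSol φ gx Y ε x,
      f x - ε / 2 * K ^ 2 ≤ φ x y ∧ φ x y ≤ f x := by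
    intro x hx ε hε y hy
    obtain ⟨hyY, hopt⟩ := hy
    refine ⟨?_, hle x y hyY⟩
    obtain ⟨ystar, hysY, hfx⟩ := hmax x
    have h1 := hopt ystar hysY
    have h2 : ‖gx x ystar‖ ^ 2 ≤ K ^ 2 :=
      pow_le_pow_left₀ (norm_nonneg _) (hK x hx ystar hysY) 2
    have h3 : 0 ≤ ε / 2 * ‖gx x y‖ ^ 2 :=
      mul_nonneg (by linarith) (sq_nonneg _)
    have h4 : 0 ≤ ε / 2 * (K ^ 2 - ‖gx x ystar‖ ^ 2) :=
      mul_nonneg (by linarith) (by linarith)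
    nlinarith
  -- part (a)
  have hsnd : Tendsto (fun p : EuclideanSpace ℝ (Fin n) × ℝ => p.2) F (𝓝 0) :=
    tendsto_snd.mono_right nhdsWithin_le_nhds
  have hfst : Tendsto (Prod.fst : EuclideanSpace ℝ (Fin n) × ℝ → _) F (𝓝 xbar) := tendsto_fst
  have hmemF : ∀ᶠ p : EuclideanSpace ℝ (Fin n) × ℝ in F,
      p.1 ∈ Metric.closedBall xbar 1 ∧ 0 < p.2 :=
    Eventually.prod_mk (Metric.closedBall_mem_nhds xbar one_pos)
      (eventually_mem_nhdsWithin.mono fun t ht => ht)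
  have parta : Tendsto (fun p : EuclideanSpace ℝ (Fin n) × ℝ => φ p.1 (ysel p.2 p.1)) F
      (𝓝 (f xbar)) := by
    have hlow : Tendsto (fun p : EuclideanSpace ℝ (Fin n) × ℝ => f p.1 - p.2 / 2 * K ^ 2) F
        (𝓝 (f xbar)) := by
      have := (hfcont.comp hfst).sub (((hsnd.div_const 2)).mul_const (K ^ 2))
      simpa using this
    refine tendsto_of_tendsto_of_tendsto_of_le_of_le' hlow (hfcont.comp hfst) ?_ ?_
    · filter_upwards [hmemF] with p hp
      exact (hreg p.1 hp.1 p.2 hp.2 _ (hysel p.2 hp.2 p.1)).1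
    · filter_upwards [hmemF] with p hp
      exact (hreg p.1 hp.1 p.2 hp.2 _ (hysel p.2 hp.2 p.1)).2
  -- the key lemma
  have key : ∀ (eps : ℕ → ℝ) (xs : ℕ → EuclideanSpace ℝ (Fin n))
      (ys : ℕ → EuclideanSpace ℝ (Fin m)) (v : EuclideanSpace ℝ (Fin n)),
      (∀ k, 0 < eps k) → Tendsto eps atTop (𝓝 0) → Tendsto xs atTop (𝓝 xbar) →
      (∀ k, ys k ∈ regMaxSol φ gx Y (eps k) (xs k)) →
      Tendsto (fun k => gx (xs k) (ys k)) atTop (𝓝 v) →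
      v ∈ clarkeSubdiff f xbar := by
    intro eps xs ys v heps heps0 hxs hys hgv
    have hyY : ∀ k, ys k ∈ Y := fun k => (hys k).1
    have hball : ∀ᶠ k in atTop, xs k ∈ Metric.closedBall xbar 1 :=
      hxs (Metric.closedBall_mem_nhds xbar one_pos)
    have hφlim : Tendsto (fun k => φ (xs k) (ys k)) atTop (𝓝 (f xbar)) := by
      have l1 : Tendsto (fun k => f (xs k) - eps k / 2 * K ^ 2) atTop (𝓝 (f xbar)) := by
        have := (hfcont.comp hxs).sub ((heps0.div_const 2).mul_const (K ^ 2))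
        simpa using this
      refine tendsto_of_tendsto_of_tendsto_of_le_of_le' l1 (hfcont.comp hxs) ?_ ?_
      · filter_upwards [hball] with k hk
        exact (hreg (xs k) hk (eps k) (heps k) _ (hys k)).1
      · filter_upwards [hball] with k hk
        exact (hreg (xs k) hk (eps k) (heps k) _ (hys k)).2
    obtain ⟨ybar, hybarY, σ, hσ, hyconv⟩ := hYcomp.tendsto_subseq hyY
    have hxσ : Tendsto (fun j => xs (σ j)) atTop (𝓝 xbar) := hxs.comp hσ.tendsto_atTop
    have hpair : Tendsto (fun j => (xs (σ j), ys (σ j))) atTop (𝓝 (xbar, ybar)) :=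
      hxσ.prodMk_nhds hyconv
    have hφσ : Tendsto (fun j => φ (xs (σ j)) (ys (σ j))) atTop (𝓝 (φ xbar ybar)) :=
      (hφcont.tendsto (xbar, ybar)).comp hpair
    have hfeq : φ xbar ybar = f xbar :=
      tendsto_nhds_unique hφσ (hφlim.comp hσ.tendsto_atTop)
    have hveq : v = gx xbar ybar :=
      tendsto_nhds_unique (hgv.comp hσ.tendsto_atTop) ((hgxcont.tendsto (xbar, ybar)).comp hpair)
    rw [hveq]
    intro d
    -- bounded above
    have hbd : IsBoundedUnder (· ≤ ·) F
        (fun p : EuclideanSpace ℝ (Fin n) × ℝ => (f (p.1 + p.2 • d) - f p.1) / p.2) := by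
      refine ⟨K * ‖d‖, ?_⟩
      rw [eventually_map]
      have hδ : ∀ᶠ t in 𝓝[>] (0 : ℝ), 0 < t ∧ t < 1 / (2 * (‖d‖ + 1)) := by
        have h1 : ∀ᶠ t in 𝓝[>] (0 : ℝ), 0 < t := eventually_mem_nhdsWithin.mono fun t ht => ht
        have h2 : ∀ᶠ t in 𝓝 (0 : ℝ), t < 1 / (2 * (‖d‖ + 1)) :=
          eventually_lt_nhds (by positivity)
        exact h1.and (h2.filter_mono nhdsWithin_le_nhds)
      have hB : ∀ᶠ x in 𝓝 xbar, x ∈ Metric.ball xbar (1 / 2) :=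
        Metric.ball_mem_nhds xbar (by norm_num)
      filter_upwards [Eventually.prod_mk hB hδ] with p hp
      obtain ⟨hp1, hp2, hp3⟩ := hp
      have hdpos : (0 : ℝ) < ‖d‖ + 1 := by positivity
      have hnorm : ‖p.2 • d‖ = p.2 * ‖d‖ := by
        rw [norm_smul, Real.norm_eq_abs, abs_of_pos hp2]
      have hsmall : p.2 * ‖d‖ ≤ 1 / 2 := by
        have := mul_le_mul hp3.le (le_of_eq rfl) (norm_nonneg d)
          (by positivity : (0:ℝ) ≤ 1 / (2 * (‖d‖ + 1)))
        have h5 : p.2 * ‖d‖ ≤ 1 / (2 * (‖d‖ + 1)) * ‖d‖ :=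
          mul_le_mul_of_nonneg_right hp3.le (norm_nonneg d)
        have h6 : 1 / (2 * (‖d‖ + 1)) * ‖d‖ ≤ 1 / 2 := by
          rw [div_mul_eq_mul_div, mul_comm]
          rw [div_le_div_iff₀ (by positivity) (by norm_num)]
          nlinarith [norm_nonneg d]
        linarith
      have ha : p.1 ∈ Metric.closedBall xbar 1 := by
        have := Metric.mem_ball.1 hp1
        exact Metric.mem_closedBall.2 (by linarith)
      have hb : p.1 + p.2 • d ∈ Metric.closedBall xbar 1 := by
        rw [Metric.mem_closedBall, dist_eq_norm]
        have : ‖p.1 + p.2 • d - xbar‖ ≤ ‖p.1 - xbar‖ + ‖p.2 • d‖ := by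
          have : p.1 + p.2 • d - xbar = (p.1 - xbar) + p.2 • d := by abel
          rw [this]; exact norm_add_le _ _
        have h7 : ‖p.1 - xbar‖ < 1 / 2 := by
          have := Metric.mem_ball.1 hp1
          rwa [dist_eq_norm] at this
        rw [hnorm] at this
        linarith
      rw [div_le_iff₀ hp2]
      have h8 : f (p.1 + p.2 • d) - f p.1 ≤ K * ‖p.1 + p.2 • d - p.1‖ := hflip _ hb _ ha
      have h9 : p.1 + p.2 • d - p.1 = p.2 • d := by abel
      rw [h9, hnorm] at h8
      calc f (p.1 + p.2 • d) - f p.1 ≤ K * (p.2 * ‖d‖) := h8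
        _ = K * ‖d‖ * p.2 := by ring
    -- directional derivative lower bound
    have hψ0 : φ (xbar + (0 : ℝ) • d) ybar = φ xbar ybar := by
      rw [zero_smul, add_zero]
    have hcd : HasDerivAt (fun t : ℝ => xbar + t • d) d 0 := by
      simpa using ((hasDerivAt_id (0 : ℝ)).smul_const d).const_add xbar
    have hφd : HasDerivAt (fun t : ℝ => φ (xbar + t • d) ybar) ⟪gx xbar ybar, d⟫ 0 := by
      have h1 := (hgrad xbar ybar hybarY).hasFDerivAt
      have h2 : xbar + (0 : ℝ) • d = xbar := by simp
      have h3 := HasFDerivAt.comp_hasDerivAt (x := (0 : ℝ)) (h2 ▸ h1) hcd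
      simp only [InnerProductSpace.toDual_apply_apply, zero_smul, add_zero] at h3; exact h3
    have hslope : Tendsto (fun t : ℝ => (φ (xbar + t • d) ybar - φ xbar ybar) / t)
        (𝓝[>] (0 : ℝ)) (𝓝 ⟪gx xbar ybar, d⟫) := by
      have h1 := hasDerivAt_iff_tendsto_slope.1 hφd
      have h2 : 𝓝[>] (0 : ℝ) ≤ 𝓝[≠] (0 : ℝ) :=
        nhdsWithin_mono 0 (fun t ht => ne_of_gt ht)
      refine (h1.mono_left h2).congr fun t => ?_
      rw [slope_def_field]
      rw [hψ0]
      ring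
    have hι : Tendsto (fun t : ℝ => ((xbar, t) : EuclideanSpace ℝ (Fin n) × ℝ)) (𝓝[>] (0 : ℝ)) F :=
      Tendsto.prodMk tendsto_const_nhds tendsto_id
    show ⟪gx xbar ybar, d⟫ ≤ clarkeDeriv f xbar d
    apply le_of_forall_sub_le
    intro δ hδ
    have hfreq : ∃ᶠ p in F,
        ⟪gx xbar ybar, d⟫ - δ ≤ (f (p.1 + p.2 • d) - f p.1) / p.2 := by
      apply hι.frequently
      apply Eventually.frequently
      have hev := hslope.eventually (eventually_gt_nhds
        (by linarith : ⟪gx xbar ybar, d⟫ - δ < ⟪gx xbar ybar, d⟫))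
      filter_upwards [hev, eventually_mem_nhdsWithin] with t hst (ht : t ∈ Ioi (0:ℝ))
      have ht0 : (0 : ℝ) < t := ht
      have hnum : φ (xbar + t • d) ybar - φ xbar ybar ≤ f (xbar + t • d) - f xbar := by
        have := hle (xbar + t • d) ybar hybarY
        linarith [hfeq.le, hfeq.ge]
      calc ⟪gx xbar ybar, d⟫ - δ ≤ (φ (xbar + t • d) ybar - φ xbar ybar) / t := hst.le
        _ ≤ (f (xbar + t • d) - f xbar) / t := (div_le_div_iff_of_pos_right ht0).2 hnum
    exact le_limsup_of_frequently_le hfreq hbd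
  refine ⟨parta, ?_, ?_⟩
  · intro eps xs v h1 h2 h3 h4
    exact key eps xs (fun k => ysel (eps k) (xs k)) v h1 h2 h3
      (fun k => hysel (eps k) (h1 k) (xs k)) h4
  · rintro u ⟨eps, xs, vs, h1, h2, h3, h4, h5⟩
    choose ys hysm hvs using h4
    exact key eps xs ys u h1 h2 h3 hysm
      (Tendsto.congr (fun k => (hvs k).symm) h5)
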